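/- (Lemma 2.1) Assume ρ > 0, and let ε > 0 and θ > 0 satisfy θ·(β_max − 1)⁺ ≤ 1. Then the function V(x) := exp(εθΨ(−x) + Ψ_ε(x)) satisfies, for every c ∈ [1,∞) as well as for the untruncated drift b (the case c = ∞): ⟨∇V(x), b_c(x,u)⟩ ≤ ε(θρ + (m/(2ε))(1+εθ) − (θ∧1)‖x‖₁)·V(x) for all x ∈ K₀⁻ and all u ∈ Δ, and ⟨∇V(x), b_c(x,u)⟩ ≤ −ε(ρ/m − θρ − θm/2 + θ‖x⁻‖₁)·V(x) for all (x,u) ∈ K₀⁺ × Δ. -/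

import Mathlib

open scoped BigOperators

/-- The piecewise function ψ. -/
noncomputable def psiFn (t : ℝ) : ℝ :=
  if t ≤ -1 then -(1/2)
  else if t ≤ 0 then (t+1)^3 - (1/2)*(t+1)^4 - 1/2
  else t

/-- ψ_ε(t) := ψ(εt). -/
noncomputable def psiE (ε t : ℝ) : ℝ := psiFn (ε * t)

/-- Ψ(x) := Σᵢ ψ(xᵢ)/μᵢ. -/
noncomputable def bigPsi {m : ℕ} (μ : Fin m → ℝ) (x : Fin m → ℝ) : ℝ :=
  ∑ i, psiFn (x i) / μ i

/-- Ψ_ε(x) := Σᵢ ψ_ε(xᵢ)/μᵢ. -/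
noncomputable def bigPsiE {m : ℕ} (μ : Fin m → ℝ) (ε : ℝ) (x : Fin m → ℝ) : ℝ :=
  ∑ i, psiE ε (x i) / μ i

/-- The drift b(x,u) with bᵢ(x,u) = −ρμᵢ/m − μᵢ(xᵢ − ⟨e,x⟩⁺uᵢ) − γᵢ⟨e,x⟩⁺uᵢ. -/
noncomputable def drift {m : ℕ} (ρ : ℝ) (μ γ : Fin m → ℝ) (x u : Fin m → ℝ) :
    Fin m → ℝ :=
  fun i => -(ρ * μ i / m) - μ i * (x i - max (∑ j, x j) 0 * u i)
    - γ i * max (∑ j, x j) 0 * u i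

/-- The extended generator L_u f(x) = Σᵢ λ̃ᵢ ∂²f/∂xᵢ²(x) + ⟨b(x,u), ∇f(x)⟩. -/
noncomputable def genL {m : ℕ} (lam : Fin m → ℝ) (ρ : ℝ) (μ γ : Fin m → ℝ)
    (u : Fin m → ℝ) (f : (Fin m → ℝ) → ℝ) (x : Fin m → ℝ) : ℝ :=
  ∑ i, lam i * fderiv ℝ (fun y => fderiv ℝ f y (Pi.single i 1)) x (Pi.single i 1)
    + fderiv ℝ f x (drift ρ μ γ x u)

/-- ‖x‖₁ = Σᵢ|xᵢ|. -/
noncomputable def norm1 {m : ℕ} (x : Fin m → ℝ) : ℝ := ∑ i, |x i|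

/-- ‖x⁻‖₁ = Σᵢ max(−xᵢ,0). -/
noncomputable def norm1neg {m : ℕ} (x : Fin m → ℝ) : ℝ := ∑ i, max (-(x i)) 0

/-- The truncated drift b_c, with the abandonment term cut off on {xᵢ ≤ c}. -/
noncomputable def driftC {m : ℕ} (ρ : ℝ) (μ γ : Fin m → ℝ) (c : ℝ) (x u : Fin m → ℝ) :
    Fin m → ℝ :=
  fun i => -(ρ * μ i / m) - μ i * (x i - max (∑ j, x j) 0 * u i)
    - (if x i ≤ c then γ i * max (∑ j, x j) 0 * u i else 0)

open Set

noncomputable def psiD (t : ℝ) : ℝ :=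
  if t ≤ -1 then 0 else if t ≤ 0 then 3*(t+1)^2 - 2*(t+1)^3 else 1

lemma psiD_nonneg (t : ℝ) : 0 ≤ psiD t := by
  unfold psiD; split_ifs with h1 h2
  · exact le_rfl
  · nlinarith [sq_nonneg (t+1)]
  · norm_num

lemma psiD_le_one (t : ℝ) : psiD t ≤ 1 := by
  unfold psiD; split_ifs with h1 h2
  · norm_num
  · push_neg at h1
    nlinarith [mul_nonneg (sq_nonneg t) (by linarith : (0:ℝ) ≤ 3 + 2*t)]
  · exact le_refl 1

lemma psiD_one_of_nonneg {t : ℝ} (h : 0 ≤ t) : psiD t = 1 := by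
  unfold psiD
  rw [if_neg (by linarith)]
  split_ifs with h2
  · have : t = 0 := le_antisymm h2 h
    subst this; norm_num
  · rfl

lemma psiD_zero_of_le {t : ℝ} (h : t ≤ -1) : psiD t = 0 := if_pos h

lemma psiD_mul_le {s : ℝ} (h : 0 ≤ s) : psiD (-s) * s ≤ 1/2 := by
  unfold psiD
  split_ifs with h1 h2
  · linarith
  · push_neg at h1
    nlinarith [sq_nonneg (s - 1/2), sq_nonneg (2*s^2 - s), sq_nonneg (s*(1-s)), mul_nonneg h (sq_nonneg (1-s)), sq_nonneg (2*s-1), mul_nonneg (mul_nonneg h h) (by linarith : (0:ℝ) ≤ 1 - s)]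
  · linarith

lemma hasDerivAt_psiFn (t : ℝ) : HasDerivAt psiFn (psiD t) t := by
  have hf2 : ∀ s : ℝ, HasDerivAt (fun u : ℝ => (u+1)^3 - (1/2)*(u+1)^4 - 1/2)
      (3*(s+1)^2 - 2*(s+1)^3) s := by
    intro s
    have h1 : HasDerivAt (fun u : ℝ => u + 1) 1 s := (hasDerivAt_id s).add_const 1
    have h3 := (h1.pow 3).sub (((h1.pow 4)).const_mul (1/2 : ℝ))
    have h4 := h3.sub_const (1/2 : ℝ)
    refine h4.congr_deriv ?_
    push_cast; ring
  have eq1 : EqOn psiFn (fun _ => -(1/2 : ℝ)) (Iic (-1 : ℝ)) := by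
    intro s hs; simp only [psiFn, if_pos (mem_Iic.mp hs)]
  have eq2 : EqOn psiFn (fun u : ℝ => (u+1)^3 - (1/2)*(u+1)^4 - 1/2) (Icc (-1 : ℝ) 0) := by
    intro s hs
    obtain ⟨hs1, hs2⟩ := hs
    by_cases h : s ≤ -1
    · have : s = -1 := le_antisymm h hs1
      subst this; norm_num [psiFn]
    · simp only [psiFn, if_neg h, if_pos hs2]
  have eq3 : EqOn psiFn id (Ici (0 : ℝ)) := by
    intro s hs
    have hs0 : (0:ℝ) ≤ s := hs
    by_cases h : s ≤ 0
    · have : s = 0 := le_antisymm h hs0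
      subst this; norm_num [psiFn]
    · simp only [psiFn, if_neg (by linarith : ¬ s ≤ -1), if_neg h, id]
  rcases lt_trichotomy t (-1) with h | h | h
  · have heq : psiFn =ᶠ[nhds t] (fun _ => -(1/2 : ℝ)) :=
      Filter.eventuallyEq_of_mem (Iio_mem_nhds h) (fun s hs => eq1 (mem_Iic.mpr (le_of_lt (mem_Iio.mp hs))))
    rw [psiD_zero_of_le h.le]
    exact (hasDerivAt_const t (-(1/2):ℝ)).congr_of_eventuallyEq heq
  · subst h
    have hA : HasDerivWithinAt psiFn 0 (Iic (-1 : ℝ)) (-1) :=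
      ((hasDerivAt_const (-1 : ℝ) (-(1/2):ℝ)).hasDerivWithinAt).congr eq1 (eq1 (by norm_num))
    have hB : HasDerivWithinAt psiFn 0 (Icc (-1 : ℝ) 0) (-1) := by
      have hB' := (hf2 (-1)).hasDerivWithinAt.congr eq2 (eq2 (by norm_num))
      norm_num at hB'
      exact hB'
    have hU := hA.union hB
    rw [Set.Iic_union_Icc_eq_Iic (by norm_num : (-1:ℝ) ≤ 0)] at hU
    have := hU.hasDerivAt (Iic_mem_nhds (by norm_num : (-1:ℝ) < 0))
    rwa [psiD_zero_of_le le_rfl]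
  · rcases lt_trichotomy t 0 with h0 | h0 | h0
    · have heq : psiFn =ᶠ[nhds t] (fun u : ℝ => (u+1)^3 - (1/2)*(u+1)^4 - 1/2) :=
        Filter.eventuallyEq_of_mem (Ioo_mem_nhds h h0) (fun s hs => eq2 ⟨hs.1.le, hs.2.le⟩)
      have hD := (hf2 t).congr_of_eventuallyEq heq
      have : psiD t = 3*(t+1)^2 - 2*(t+1)^3 := by
        unfold psiD; rw [if_neg (by linarith), if_pos h0.le]
      rwa [this]
    · subst h0
      have hA : HasDerivWithinAt psiFn 1 (Icc (-1 : ℝ) 0) 0 := by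
        have hA' := (hf2 0).hasDerivWithinAt.congr eq2 (eq2 (by norm_num))
        norm_num at hA'
        exact hA'
      have hB : HasDerivWithinAt psiFn 1 (Ici (0 : ℝ)) 0 :=
        ((hasDerivAt_id (0:ℝ)).hasDerivWithinAt).congr eq3 (eq3 (by norm_num))
      have hU := hA.union hB
      rw [Set.Icc_union_Ici_eq_Ici (by norm_num : (-1:ℝ) ≤ 0)] at hU
      have := hU.hasDerivAt (Ici_mem_nhds (by norm_num : (-1:ℝ) < 0))
      rwa [psiD_one_of_nonneg le_rfl]
    · have heq : psiFn =ᶠ[nhds t] id :=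
        Filter.eventuallyEq_of_mem (Ioi_mem_nhds h0) (fun s hs => eq3 (mem_Ici.mpr (le_of_lt (mem_Ioi.mp hs))))
      rw [psiD_one_of_nonneg h0.le]
      exact (hasDerivAt_id t).congr_of_eventuallyEq heq

lemma hasDerivAt_g (μi ε θ : ℝ) (t : ℝ) :
    HasDerivAt (fun s => (ε*θ*psiFn (-s) + psiFn (ε*s))/μi)
      ((ε*psiD (ε*t) - ε*θ*psiD (-t))/μi) t := by
  have h1 : HasDerivAt (fun s : ℝ => psiFn (-s)) (-psiD (-t)) t := by
    have := (hasDerivAt_psiFn (-t)).comp t ((hasDerivAt_id t).neg)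
    exact this.congr_deriv (by ring)
  have h2 : HasDerivAt (fun s : ℝ => psiFn (ε*s)) (psiD (ε*t) * ε) t := by
    have := (hasDerivAt_psiFn (ε*t)).comp t ((hasDerivAt_id t).const_mul ε)
    exact this.congr_deriv (by ring)
  have h3 := ((h1.const_mul (ε*θ)).add h2).div_const μi
  refine h3.congr_deriv ?_
  ring

lemma fderiv_V_apply {m : ℕ} (μ : Fin m → ℝ) (ε θ : ℝ) (x v : Fin m → ℝ) :
    fderiv ℝ (fun y => Real.exp (ε * θ * bigPsi μ (-y) + bigPsiE μ ε y)) x v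
      = (∑ i, (ε*psiD (ε*x i) - ε*θ*psiD (-x i))/μ i * v i)
        * Real.exp (ε * θ * bigPsi μ (-x) + bigPsiE μ ε x) := by
  have hcoord : ∀ i : Fin m, HasFDerivAt
      (fun y : Fin m → ℝ => (ε*θ*psiFn (-(y i)) + psiFn (ε*(y i)))/μ i)
      (((ε*psiD (ε*x i) - ε*θ*psiD (-x i))/μ i) •
        (ContinuousLinearMap.proj i : (Fin m → ℝ) →L[ℝ] ℝ)) x := by
    intro i
    have hproj : HasFDerivAt (fun y : Fin m → ℝ => y i)
        (ContinuousLinearMap.proj i : (Fin m → ℝ) →L[ℝ] ℝ) x :=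
      (ContinuousLinearMap.proj i : (Fin m → ℝ) →L[ℝ] ℝ).hasFDerivAt
    exact (hasDerivAt_g (μ i) ε θ (x i)).comp_hasFDerivAt x hproj
  have hsum := HasFDerivAt.sum (fun i (_ : i ∈ Finset.univ) => hcoord i)
  have hfun : (fun y : Fin m → ℝ => ε * θ * bigPsi μ (-y) + bigPsiE μ ε y)
      = fun y : Fin m → ℝ => ∑ i, (ε*θ*psiFn (-(y i)) + psiFn (ε*(y i)))/μ i := by
    funext y
    simp only [bigPsi, bigPsiE, psiE, Pi.neg_apply, Finset.mul_sum]
    rw [← Finset.sum_add_distrib]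
    exact Finset.sum_congr rfl (fun i _ => by ring)
  have hF : HasFDerivAt (fun y : Fin m → ℝ => ε * θ * bigPsi μ (-y) + bigPsiE μ ε y)
      (∑ i, ((ε*psiD (ε*x i) - ε*θ*psiD (-x i))/μ i) •
        (ContinuousLinearMap.proj i : (Fin m → ℝ) →L[ℝ] ℝ)) x := by
    rw [hfun]; simpa only [Finset.sum_fn] using hsum
  have hexp := (Real.hasDerivAt_exp (ε * θ * bigPsi μ (-x) + bigPsiE μ ε x)).comp_hasFDerivAt x hF
  simp only [Function.comp_def] at hexp
  rw [hexp.fderiv]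
  simp only [ContinuousLinearMap.smul_apply, ContinuousLinearMap.coe_sum',
    Finset.sum_apply, ContinuousLinearMap.proj_apply, smul_eq_mul]
  ring

section perI
variable {ε θ t : ℝ} (hε : 0 < ε) (hθ : 0 < θ)

lemma dval_le (hε : 0 < ε) (hθ : 0 < θ) (t : ℝ) :
    ε*psiD (ε*t) - ε*θ*psiD (-t) ≤ ε := by
  have a : ε*psiD (ε*t) ≤ ε*1 := mul_le_mul_of_nonneg_left (psiD_le_one _) hε.le
  have b : 0 ≤ ε*θ*psiD (-t) := mul_nonneg (mul_nonneg hε.le hθ.le) (psiD_nonneg _)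
  linarith

lemma dval_ge (hε : 0 < ε) (hθ : 0 < θ) (t : ℝ) :
    -(ε*θ) ≤ ε*psiD (ε*t) - ε*θ*psiD (-t) := by
  have a : ε*θ*psiD (-t) ≤ ε*θ*1 := mul_le_mul_of_nonneg_left (psiD_le_one _) (mul_nonneg hε.le hθ.le)
  have b : 0 ≤ ε*psiD (ε*t) := mul_nonneg hε.le (psiD_nonneg _)
  linarith

/-- per-coordinate bound, negative half-space case -/
lemma perI_neg (hε : 0 < ε) (hθ : 0 < θ) (t : ℝ) :
    -(ε*psiD (ε*t) - ε*θ*psiD (-t)) * t ≤ (1 + ε*θ)/2 - ε * min θ 1 * |t| := by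
  rcases le_total 0 t with ht | ht
  · rw [abs_of_nonneg ht, psiD_one_of_nonneg (mul_nonneg hε.le ht)]
    have k1 : psiD (-t) * t ≤ 1/2 := psiD_mul_le ht
    have c1 : ε*θ*(psiD (-t) * t) ≤ ε*θ*(1/2) :=
      mul_le_mul_of_nonneg_left k1 (mul_nonneg hε.le hθ.le)
    have c2 : ε*(min θ 1)*t ≤ ε*1*t :=
      mul_le_mul_of_nonneg_right
        (mul_le_mul_of_nonneg_left (min_le_right _ _) hε.le) ht
    nlinarith [c1, c2]
  · rw [abs_of_nonpos ht, psiD_one_of_nonneg (by linarith : (0:ℝ) ≤ -t)]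
    have k1 : psiD (-(ε*(-t))) * (ε*(-t)) ≤ 1/2 :=
      psiD_mul_le (mul_nonneg hε.le (by linarith))
    have k1' : psiD (ε*t) * (ε*(-t)) ≤ 1/2 := by
      have : -(ε*(-t)) = ε*t := by ring
      rwa [this] at k1
    have c2 : ε*(θ - min θ 1)*t ≤ 0 :=
      mul_nonpos_of_nonneg_of_nonpos
        (mul_nonneg hε.le (by linarith [min_le_left θ 1])) ht
    nlinarith [k1', c2]

/-- per-coordinate bound, positive half-space case -/
lemma perI_pos (hε : 0 < ε) (hθ : 0 < θ) (t : ℝ) :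
    -(ε*psiD (ε*t) - ε*θ*psiD (-t)) * t
      ≤ ε*θ/2 - ε * max t 0 + ε*(1-θ) * max (-t) 0 := by
  rcases le_total 0 t with ht | ht
  · rw [max_eq_left ht, max_eq_right (by linarith : -t ≤ 0),
      psiD_one_of_nonneg (mul_nonneg hε.le ht)]
    have k1 : psiD (-t) * t ≤ 1/2 := psiD_mul_le ht
    have c1 : ε*θ*(psiD (-t) * t) ≤ ε*θ*(1/2) :=
      mul_le_mul_of_nonneg_left k1 (mul_nonneg hε.le hθ.le)
    nlinarith [c1]
  · rw [max_eq_right ht, max_eq_left (by linarith : (0:ℝ) ≤ -t),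
      psiD_one_of_nonneg (by linarith : (0:ℝ) ≤ -t)]
    have k1 : (1 - psiD (ε*t)) * t ≤ 0 :=
      mul_nonpos_of_nonneg_of_nonpos (by linarith [psiD_le_one (ε*t)]) ht
    have c1 : ε*((1 - psiD (ε*t)) * t) ≤ 0 := mul_nonpos_of_nonneg_of_nonpos hε.le k1
    nlinarith [c1, mul_pos hε hθ]

/-- per-coordinate bound for the abandonment/service term -/
lemma perI_beta (hε : 0 < ε) (hθ : 0 < θ) {w β βmax : ℝ}
    (hw : w = 0 ∨ w = 1) (hβ0 : 0 ≤ β) (hβ : β ≤ βmax)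
    (hθβ : θ * max (βmax - 1) 0 ≤ 1) (t : ℝ) :
    (ε*psiD (ε*t) - ε*θ*psiD (-t)) * (1 - w * β) ≤ ε := by
  set d := ε*psiD (ε*t) - ε*θ*psiD (-t) with hd
  have hdu : d ≤ ε := dval_le hε hθ t
  have hdl : -(ε*θ) ≤ d := dval_ge hε hθ t
  rcases hw with hw | hw
  · simp [hw]; linarith
  · subst hw
    rw [one_mul]
    rcases le_total β 1 with hb | hb
    · rcases le_total 0 d with hd0 | hd0
      · have := mul_le_of_le_one_right hd0 (by linarith : 1 - β ≤ 1)
        linarith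
      · have := mul_nonpos_of_nonpos_of_nonneg hd0 (by linarith : 0 ≤ 1 - β)
        linarith
    · have h1 : -d * (β - 1) ≤ ε*θ*(β-1) :=
        mul_le_mul_of_nonneg_right (by linarith) (by linarith)
      have h2 : ε*θ*(β-1) ≤ ε*θ*(max (βmax-1) 0) := by
        apply mul_le_mul_of_nonneg_left _ (by positivity)
        exact le_trans (by linarith) (le_max_left _ _)
      have h3 : ε*(θ*(max (βmax-1) 0)) ≤ ε*1 :=
        mul_le_mul_of_nonneg_left hθβ hε.le
      have h4 : d*(1-β) = -d*(β-1) := by ring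
      rw [h4]
      nlinarith [h1, h2, h3]
end perI

lemma core_neg {m : ℕ} (hm : 1 ≤ m) {ρ : ℝ} (hρ : 0 < ρ) (μ γ : Fin m → ℝ)
    (hμ : ∀ i, 0 < μ i) {ε θ : ℝ} (hε : 0 < ε) (hθ : 0 < θ)
    (x u w : Fin m → ℝ) (hS : (∑ i, x i) ≤ 0) :
    ∑ i, (ε*psiD (ε*x i) - ε*θ*psiD (-x i))/μ i *
        (-(ρ * μ i / m) - μ i * (x i - max (∑ j, x j) 0 * u i)
          - w i * (γ i * max (∑ j, x j) 0 * u i))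
      ≤ ε * (θ*ρ + (m/(2*ε))*(1+ε*θ) - min θ 1 * norm1 x) := by
  have hm0 : (m:ℝ) ≠ 0 := Nat.cast_ne_zero.mpr (by omega)
  have hmpos : (0:ℝ) < m := by positivity
  have hmax : max (∑ j, x j) 0 = 0 := max_eq_right hS
  set d : Fin m → ℝ := fun i => ε*psiD (ε*x i) - ε*θ*psiD (-x i) with hd
  have hsplit : ∀ i, d i/μ i *
      (-(ρ * μ i / m) - μ i * (x i - max (∑ j, x j) 0 * u i)
        - w i * (γ i * max (∑ j, x j) 0 * u i))
      = -(d i)*(ρ/m) + (-(d i)*x i) := by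
    intro i
    rw [hmax]
    have := (hμ i).ne'
    field_simp
    ring
  calc ∑ i, d i/μ i * (-(ρ * μ i / m) - μ i * (x i - max (∑ j, x j) 0 * u i)
          - w i * (γ i * max (∑ j, x j) 0 * u i))
      = ∑ i, (-(d i)*(ρ/m) + (-(d i)*x i)) := Finset.sum_congr rfl (fun i _ => hsplit i)
    _ ≤ ∑ i : Fin m, (ε*θ*(ρ/m) + ((1 + ε*θ)/2 - ε * min θ 1 * |x i|)) := by
        apply Finset.sum_le_sum
        intro i _
        have h1 : -(d i)*(ρ/m) ≤ ε*θ*(ρ/m) := by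
          apply mul_le_mul_of_nonneg_right _ (by positivity)
          have := dval_ge hε hθ (x i)
          simp only [hd]
          linarith
        have h2 : -(d i)*x i ≤ (1 + ε*θ)/2 - ε * min θ 1 * |x i| := perI_neg hε hθ (x i)
        linarith
    _ = (m:ℝ)*(ε*θ*(ρ/m)) + ((m:ℝ)*((1 + ε*θ)/2) - ε * min θ 1 * norm1 x) := by
        rw [Finset.sum_add_distrib, Finset.sum_sub_distrib, Finset.sum_const,
          Finset.sum_const, ← Finset.mul_sum]
        simp [norm1, Finset.card_univ, nsmul_eq_mul]
    _ = ε * (θ*ρ + (m/(2*ε))*(1+ε*θ) - min θ 1 * norm1 x) := by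
        field_simp
        ring

lemma core_pos {m : ℕ} (hm : 1 ≤ m) {ρ : ℝ} (hρ : 0 < ρ) (μ γ : Fin m → ℝ)
    (hμ : ∀ i, 0 < μ i) (hγ : ∀ i, 0 ≤ γ i) {βmax : ℝ}
    (hβub : ∀ i, γ i / μ i ≤ βmax)
    {ε θ : ℝ} (hε : 0 < ε) (hθ : 0 < θ) (hθβ : θ * max (βmax - 1) 0 ≤ 1)
    (x u w : Fin m → ℝ) (hu0 : ∀ i, 0 ≤ u i) (hu1 : ∑ i, u i = 1)
    (hw : ∀ i, w i = 0 ∨ w i = 1) (hS : 0 ≤ ∑ i, x i) :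
    ∑ i, (ε*psiD (ε*x i) - ε*θ*psiD (-x i))/μ i *
        (-(ρ * μ i / m) - μ i * (x i - max (∑ j, x j) 0 * u i)
          - w i * (γ i * max (∑ j, x j) 0 * u i))
      ≤ -(ε * (ρ/m - θ*ρ - θ*m/2 + θ * norm1neg x)) := by
  have hm0 : (m:ℝ) ≠ 0 := Nat.cast_ne_zero.mpr (by omega)
  have hmpos : (0:ℝ) < m := by positivity
  haveI : NeZero m := ⟨by omega⟩
  have hmax : max (∑ j, x j) 0 = ∑ j, x j := max_eq_left hS
  set S : ℝ := ∑ j, x j with hSdef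
  set d : Fin m → ℝ := fun i => ε*psiD (ε*x i) - ε*θ*psiD (-x i) with hd
  -- split each term into four parts
  have hsplit : ∀ i, d i/μ i *
      (-(ρ * μ i / m) - μ i * (x i - max (∑ j, x j) 0 * u i)
        - w i * (γ i * max (∑ j, x j) 0 * u i))
      = ((-(d i) - ε*θ)*(ρ/m) + ε*θ*(ρ/m)) + (-(d i)*x i)
        + S * u i * (d i * (1 - w i * (γ i / μ i))) := by
    intro i
    rw [hmax]
    have := (hμ i).ne'
    field_simp
    ring
  -- there is a coordinate with nonnegative x
  have hex : ∃ i0 : Fin m, 0 ≤ x i0 := by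
    by_contra hcon
    push_neg at hcon
    have : S < 0 := Finset.sum_neg (fun i _ => hcon i) Finset.univ_nonempty
    linarith
  obtain ⟨i0, hi0⟩ := hex
  -- bound the four sums
  have hS1 : ∑ i, (-(d i) - ε*θ)*(ρ/m) ≤ -ε*(ρ/m) := by
    have hterm : ∀ i, (-(d i) - ε*θ)*(ρ/m) ≤ 0 := by
      intro i
      apply mul_nonpos_of_nonpos_of_nonneg _ (by positivity)
      have := dval_ge hε hθ (x i); simp only [hd]; linarith
    have hterm0 : (-(d i0) - ε*θ)*(ρ/m) ≤ -ε*(ρ/m) := by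
      have hd0 : ε - ε*θ ≤ d i0 := by
        have h1 : psiD (ε * x i0) = 1 := psiD_one_of_nonneg (by positivity)
        have h2 : psiD (-(x i0)) ≤ 1 := psiD_le_one _
        have h3 : 0 ≤ ε*θ := by positivity
        simp only [hd, h1]
        nlinarith
      have : -(d i0) - ε*θ ≤ -ε := by linarith
      calc (-(d i0) - ε*θ)*(ρ/m) ≤ (-ε)*(ρ/m) :=
            mul_le_mul_of_nonneg_right this (by positivity)
        _ = -ε*(ρ/m) := by ring
    calc ∑ i, (-(d i) - ε*θ)*(ρ/m)
        = (-(d i0) - ε*θ)*(ρ/m) + ∑ i ∈ Finset.univ.erase i0, (-(d i) - ε*θ)*(ρ/m) :=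
          (Finset.add_sum_erase _ _ (Finset.mem_univ i0)).symm
      _ ≤ -ε*(ρ/m) + 0 := by
          gcongr
          exact Finset.sum_nonpos (fun i _ => hterm i)
      _ = -ε*(ρ/m) := by ring
  have hS2 : ∑ _i : Fin m, ε*θ*(ρ/m) = (m:ℝ)*(ε*θ*(ρ/m)) := by
    rw [Finset.sum_const, Finset.card_univ]
    simp [nsmul_eq_mul]
  have hS3 : ∑ i, -(d i)*x i
      ≤ (m:ℝ)*(ε*θ/2) - ε*(∑ i, max (x i) 0) + ε*(1-θ)*norm1neg x := by
    calc ∑ i, -(d i)*x i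
        ≤ ∑ i : Fin m, (ε*θ/2 - ε*max (x i) 0 + ε*(1-θ)*max (-(x i)) 0) :=
          Finset.sum_le_sum (fun i _ => perI_pos hε hθ (x i))
      _ = (m:ℝ)*(ε*θ/2) - ε*(∑ i, max (x i) 0) + ε*(1-θ)*norm1neg x := by
          rw [Finset.sum_add_distrib, Finset.sum_sub_distrib, Finset.sum_const,
            ← Finset.mul_sum, ← Finset.mul_sum, Finset.card_univ]
          simp [norm1neg, nsmul_eq_mul]
  have hS4 : ∑ i, S * u i * (d i * (1 - w i * (γ i / μ i))) ≤ ε * S := by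
    calc ∑ i, S * u i * (d i * (1 - w i * (γ i / μ i)))
        ≤ ∑ i, S * u i * ε := by
          apply Finset.sum_le_sum
          intro i _
          exact mul_le_mul_of_nonneg_left
            (perI_beta hε hθ (hw i) (div_nonneg (hγ i) (hμ i).le) (hβub i) hθβ (x i))
            (mul_nonneg hS (hu0 i))
      _ = ε * S := by rw [← Finset.sum_mul, ← Finset.mul_sum, hu1]; ring
  -- S = P - N
  have hPN : S = (∑ i, max (x i) 0) - norm1neg x := by
    rw [hSdef, norm1neg, ← Finset.sum_sub_distrib]
    apply Finset.sum_congr rfl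
    intro i _
    rcases le_total (x i) 0 with h | h
    · simp [max_eq_right h, max_eq_left (show (0:ℝ) ≤ -(x i) by linarith)]
    · simp [max_eq_left h, max_eq_right (show -(x i) ≤ (0:ℝ) by linarith)]
  -- assemble
  have hsum : ∑ i, d i/μ i *
      (-(ρ * μ i / m) - μ i * (x i - max (∑ j, x j) 0 * u i)
        - w i * (γ i * max (∑ j, x j) 0 * u i))
      = (∑ i, (-(d i) - ε*θ)*(ρ/m)) + (∑ _i : Fin m, ε*θ*(ρ/m))
        + (∑ i, -(d i)*x i) + (∑ i, S * u i * (d i * (1 - w i * (γ i / μ i)))) := by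
    rw [← Finset.sum_add_distrib, ← Finset.sum_add_distrib, ← Finset.sum_add_distrib]
    exact Finset.sum_congr rfl (fun i _ => hsplit i)
  rw [hsum]
  have hfinal : -ε*(ρ/m) + (m:ℝ)*(ε*θ*(ρ/m))
      + ((m:ℝ)*(ε*θ/2) - ε*(∑ i, max (x i) 0) + ε*(1-θ)*norm1neg x)
      + ε * S = -(ε * (ρ/m - θ*ρ - θ*m/2 + θ * norm1neg x)) := by
    rw [hPN]
    field_simp
    ring
  linarith [hS1, hS3, hS4, hS2.le, hS2.ge, hfinal]


theorem stmt5_aux {m : ℕ} (hm : 1 ≤ m) (ρ : ℝ) (hρ : 0 < ρ) (μ γ : Fin m → ℝ)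
    (hμ : ∀ i, 0 < μ i) (hγ : ∀ i, 0 ≤ γ i) (βmax : ℝ)
    (hβub : ∀ i, γ i / μ i ≤ βmax)
    (ε θ : ℝ) (hε : 0 < ε) (hθ : 0 < θ) (hθβ : θ * max (βmax - 1) 0 ≤ 1)
    (x u : Fin m → ℝ) (hu : u ∈ stdSimplex ℝ (Fin m)) (w : Fin m → ℝ)
    (hw : ∀ i, w i = 0 ∨ w i = 1) :
    ((∑ i, x i) ≤ 0 →
      fderiv ℝ (fun y => Real.exp (ε * θ * bigPsi μ (-y) + bigPsiE μ ε y)) x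
          (fun i => -(ρ * μ i / m) - μ i * (x i - max (∑ j, x j) 0 * u i)
            - w i * (γ i * max (∑ j, x j) 0 * u i))
        ≤ ε * (θ * ρ + (m / (2 * ε)) * (1 + ε * θ) - min θ 1 * norm1 x)
            * Real.exp (ε * θ * bigPsi μ (-x) + bigPsiE μ ε x)) ∧
    (0 ≤ ∑ i, x i →
      fderiv ℝ (fun y => Real.exp (ε * θ * bigPsi μ (-y) + bigPsiE μ ε y)) x
          (fun i => -(ρ * μ i / m) - μ i * (x i - max (∑ j, x j) 0 * u i)
            - w i * (γ i * max (∑ j, x j) 0 * u i))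
        ≤ -(ε * (ρ / m - θ * ρ - θ * m / 2 + θ * norm1neg x))
            * Real.exp (ε * θ * bigPsi μ (-x) + bigPsiE μ ε x)) := by
  have hE : 0 < Real.exp (ε * θ * bigPsi μ (-x) + bigPsiE μ ε x) := Real.exp_pos _
  rw [fderiv_V_apply]
  constructor
  · intro hS
    exact mul_le_mul_of_nonneg_right
      (core_neg hm hρ μ γ hμ hε hθ x u w hS) hE.le
  · intro hS
    exact mul_le_mul_of_nonneg_right
      (core_pos hm hρ μ γ hμ hγ hβub hε hθ hθβ x u w hu.1 hu.2 hw hS) hE.le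

/-- Lemma 2.1: drift inequalities for V(x) = exp(εθΨ(−x)+Ψ_ε(x)),
for every truncation level c ∈ [1,∞) and also for the untruncated drift. -/
theorem stmt5 {m : ℕ} (hm : 1 ≤ m) (ρ : ℝ) (hρ : 0 < ρ) (μ γ : Fin m → ℝ)
    (hμ : ∀ i, 0 < μ i) (hγ : ∀ i, 0 ≤ γ i) (βmax : ℝ)
    (hβmax : IsGreatest (Set.range fun i => γ i / μ i) βmax)
    (ε θ : ℝ) (hε : 0 < ε) (hθ : 0 < θ) (hθβ : θ * max (βmax - 1) 0 ≤ 1) :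
    (∀ c : ℝ, 1 ≤ c → ∀ x u : Fin m → ℝ, u ∈ stdSimplex ℝ (Fin m) →
      ((∑ i, x i) ≤ 0 →
        fderiv ℝ (fun y => Real.exp (ε * θ * bigPsi μ (-y) + bigPsiE μ ε y)) x
            (driftC ρ μ γ c x u)
          ≤ ε * (θ * ρ + (m / (2 * ε)) * (1 + ε * θ) - min θ 1 * norm1 x)
              * Real.exp (ε * θ * bigPsi μ (-x) + bigPsiE μ ε x)) ∧
      (0 ≤ ∑ i, x i →
        fderiv ℝ (fun y => Real.exp (ε * θ * bigPsi μ (-y) + bigPsiE μ ε y)) x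
            (driftC ρ μ γ c x u)
          ≤ -(ε * (ρ / m - θ * ρ - θ * m / 2 + θ * norm1neg x))
              * Real.exp (ε * θ * bigPsi μ (-x) + bigPsiE μ ε x))) ∧
    (∀ x u : Fin m → ℝ, u ∈ stdSimplex ℝ (Fin m) →
      ((∑ i, x i) ≤ 0 →
        fderiv ℝ (fun y => Real.exp (ε * θ * bigPsi μ (-y) + bigPsiE μ ε y)) x
            (drift ρ μ γ x u)
          ≤ ε * (θ * ρ + (m / (2 * ε)) * (1 + ε * θ) - min θ 1 * norm1 x)
              * Real.exp (ε * θ * bigPsi μ (-x) + bigPsiE μ ε x)) ∧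
      (0 ≤ ∑ i, x i →
        fderiv ℝ (fun y => Real.exp (ε * θ * bigPsi μ (-y) + bigPsiE μ ε y)) x
            (drift ρ μ γ x u)
          ≤ -(ε * (ρ / m - θ * ρ - θ * m / 2 + θ * norm1neg x))
              * Real.exp (ε * θ * bigPsi μ (-x) + bigPsiE μ ε x))) := by
  have hβub : ∀ i, γ i / μ i ≤ βmax := fun i => hβmax.2 ⟨i, rfl⟩
  constructor
  · intro c hc x u hu
    have hdc : driftC ρ μ γ c x u
        = fun i => -(ρ * μ i / m) - μ i * (x i - max (∑ j, x j) 0 * u i)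
          - (fun i => if x i ≤ c then (1:ℝ) else 0) i
            * (γ i * max (∑ j, x j) 0 * u i) := by
      funext i
      simp only [driftC]
      split_ifs with h <;> ring
    rw [hdc]
    exact stmt5_aux hm ρ hρ μ γ hμ hγ βmax hβub ε θ hε hθ hθβ x u hu _
      (fun i => by by_cases h : x i ≤ c <;> simp [h])
  · intro x u hu
    have hdc : drift ρ μ γ x u
        = fun i => -(ρ * μ i / m) - μ i * (x i - max (∑ j, x j) 0 * u i)
          - (fun _ : Fin m => (1:ℝ)) i * (γ i * max (∑ j, x j) 0 * u i) := by
      funext i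
      simp only [drift]
      ring
    rw [hdc]
    exact stmt5_aux hm ρ hρ μ γ hμ hγ βmax hβub ε θ hε hθ hθβ x u hu _
      (fun i => Or.inr rfl)
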